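/- Let A be a d×d integer dilation matrix (all eigenvalues greater than 1 in absolute value). Let S(A) ⊂ [0,1)^d be a set such that A·S(A) is a complete set of representatives of ℤ^d/Aℤ^d containing 0. Then the sets A^j(k + s), for j ≥ 1, s ∈ S(A)\{0}, k ∈ ℤ^d, form a partition of ℤ^d\{0}: their union over all j ∈ ℕ, s ∈ S(A)\{0} equals ℤ^d\{0}, and the sets A^j{k+s : k ∈ ℤ^d} and A^{j'}{k+s' : k ∈ ℤ^d} are disjoint whenever j ≠ j' or s ≠ s'. -/

import Mathlib

open Matrix

open scoped NNReal ENNReal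

lemma eval_charpoly_aux {n R : Type*} [DecidableEq n] [Fintype n] [CommRing R]
    (M : Matrix n n R) (t : R) :
    M.charpoly.eval t = (t • (1 : Matrix n n R) - M).det := by
  rw [Matrix.charpoly, ← Polynomial.coe_evalRingHom, RingHom.map_det]
  congr 1
  ext i j
  by_cases h : i = j <;>
    simp [h, charmatrix_apply, Matrix.one_apply, Matrix.smul_apply, Matrix.diagonal_apply]

lemma det_map_ne_zero_aux (d : ℕ) (A : Matrix (Fin d) (Fin d) ℝ)
    (heig : ∀ μ ∈ (A.map Complex.ofReal).charpoly.roots, 1 < ‖μ‖) :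
    (A.map Complex.ofReal).det ≠ 0 := by
  intro h
  have h0 : (A.map Complex.ofReal).charpoly.IsRoot 0 := by
    rw [Polynomial.IsRoot, eval_charpoly_aux]
    simp [Matrix.det_neg, h]
  have : (0 : ℂ) ∈ (A.map Complex.ofReal).charpoly.roots := by
    rw [Polynomial.mem_roots ((A.map Complex.ofReal).charpoly_monic.ne_zero)]
    exact h0
  exact absurd (heig 0 this) (by simp)

attribute [local instance] Matrix.linftyOpNormedRing Matrix.linftyOpNormedAlgebra

lemma decay_aux (d : ℕ) (A : Matrix (Fin d) (Fin d) ℝ)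
    (heig : ∀ μ ∈ (A.map Complex.ofReal).charpoly.roots, 1 < ‖μ‖)
    (x : Fin d → ℝ) (hx : x ≠ 0) :
    ∃ N : ℕ, ∀ n ≥ N, ¬ ∃ y : Fin d → ℤ, x = (A ^ n).mulVec (fun i => (y i : ℝ)) := by
  haveI : CompleteSpace (Matrix (Fin d) (Fin d) ℂ) :=
    FiniteDimensional.complete ℂ _
  set Am : Matrix (Fin d) (Fin d) ℂ := A.map Complex.ofReal with hAm
  have hdet : Am.det ≠ 0 := det_map_ne_zero_aux d A heig
  have hu : IsUnit Am.det := Ne.isUnit hdet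
  set B : Matrix (Fin d) (Fin d) ℂ := Am⁻¹ with hB
  have hBA : B * Am = 1 := Matrix.nonsing_inv_mul _ hu
  have hAB : Am * B = 1 := Matrix.mul_nonsing_inv _ hu
  -- bound on the spectrum of B
  set R : Finset ℂ := Am.charpoly.roots.toFinset with hR
  set c : ℝ≥0 := if h : R.Nonempty then (R.inf' h fun μ => ‖μ‖₊)⁻¹ else 0 with hc
  have hc1 : c < 1 := by
    rw [hc]
    split_ifs with h
    · rw [inv_lt_one_iff₀]
      right
      rw [Finset.lt_inf'_iff]
      intro b hb
      have := heig b (by simpa [hR, Multiset.mem_toFinset] using hb)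
      simpa [← NNReal.coe_lt_coe, coe_nnnorm] using this
    · exact zero_lt_one
  have hspec : ∀ μ ∈ spectrum ℂ B, ‖μ‖₊ ≤ c := by
    intro μ hμ
    rw [spectrum.mem_iff] at hμ
    rw [Matrix.isUnit_iff_isUnit_det, isUnit_iff_ne_zero, not_not,
      Algebra.algebraMap_eq_smul_one] at hμ
    obtain ⟨v, hv0, hv⟩ := (Matrix.exists_mulVec_eq_zero_iff).mpr hμ
    have hvB : B.mulVec v = μ • v := by
      have := hv
      rw [Matrix.sub_mulVec, sub_eq_zero, Matrix.smul_mulVec, Matrix.one_mulVec] at this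
      rw [this]
    have hμ0 : μ ≠ 0 := by
      rintro rfl
      apply hv0
      have : Am.mulVec (B.mulVec v) = Am.mulVec 0 := by rw [hvB]; simp
      rwa [Matrix.mulVec_mulVec, hAB, Matrix.one_mulVec, Matrix.mulVec_zero] at this
    have hAv : Am.mulVec v = μ⁻¹ • v := by
      have h1 : Am.mulVec (B.mulVec v) = v := by
        rw [Matrix.mulVec_mulVec, hAB, Matrix.one_mulVec]
      rw [hvB, Matrix.mulVec_smul] at h1
      conv_rhs => rw [← h1]
      rw [smul_smul, inv_mul_cancel₀ hμ0, one_smul]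
    have hdet2 : (μ⁻¹ • (1 : Matrix (Fin d) (Fin d) ℂ) - Am).det = 0 := by
      rw [← Matrix.exists_mulVec_eq_zero_iff]
      refine ⟨v, hv0, ?_⟩
      rw [Matrix.sub_mulVec, Matrix.smul_mulVec, Matrix.one_mulVec, hAv, sub_self]
    have hroot : μ⁻¹ ∈ R := by
      rw [hR, Multiset.mem_toFinset, Polynomial.mem_roots Am.charpoly_monic.ne_zero]
      rw [Polynomial.IsRoot, eval_charpoly_aux]
      exact hdet2
    have hRne : R.Nonempty := ⟨μ⁻¹, hroot⟩
    have hinf : R.inf' hRne (fun μ => ‖μ‖₊) ≤ ‖μ⁻¹‖₊ := Finset.inf'_le _ hroot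
    have hpos : (0:ℝ≥0) < R.inf' hRne fun μ => ‖μ‖₊ := by
      rw [Finset.lt_inf'_iff]
      intro b hb
      have := heig b (by simpa [hR, Multiset.mem_toFinset] using hb)
      have : (1:ℝ) < ‖b‖ := by simpa using this
      simpa [← NNReal.coe_lt_coe, coe_nnnorm] using lt_trans zero_lt_one this
    rw [hc, dif_pos hRne]
    rw [nnnorm_inv] at hinf
    have := inv_anti₀ (by simpa using hpos) hinf
    simpa [inv_inv] using this
  have hsr : spectralRadius ℂ B < 1 := by
    refine lt_of_le_of_lt (iSup₂_le fun μ hμ => ?_) (?_ : ((c:ℝ≥0∞)) < 1)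
    · exact ENNReal.coe_le_coe.mpr (hspec μ hμ)
    · exact_mod_cast hc1
  obtain ⟨ρ, hρ1, hρ2⟩ := ENNReal.lt_iff_exists_nnreal_btwn.mp hsr
  have hg := spectrum.pow_nnnorm_pow_one_div_tendsto_nhds_spectralRadius B
  have hev : ∀ᶠ n : ℕ in Filter.atTop, ((‖B ^ n‖₊ : ℝ≥0∞) ^ (1/(n:ℝ))) < ρ :=
    hg.eventually_lt_const hρ1
  have hρlt1 : (ρ:ℝ) < 1 := by exact_mod_cast hρ2
  set xC : Fin d → ℂ := fun i => (x i : ℂ) with hxCdef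
  have hxn : Filter.Tendsto (fun n : ℕ => (ρ:ℝ)^n * ‖xC‖) Filter.atTop (nhds 0) := by
    simpa using (tendsto_pow_atTop_nhds_zero_of_lt_one ρ.coe_nonneg hρlt1).mul_const ‖xC‖
  have hev2 : ∀ᶠ n : ℕ in Filter.atTop, (ρ:ℝ)^n * ‖xC‖ < 1 :=
    hxn.eventually_lt_const zero_lt_one
  obtain ⟨N, hN⟩ := Filter.eventually_atTop.mp ((hev.and hev2).and (Filter.eventually_ge_atTop 1))
  refine ⟨N, fun n hn hyex => ?_⟩
  obtain ⟨⟨h1, h2⟩, h3⟩ := hN n hn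
  obtain ⟨y, hy⟩ := hyex
  have hne : (n:ℝ) ≠ 0 := Nat.cast_ne_zero.mpr (by omega)
  have h4 : ((‖B ^ n‖₊ : ℝ≥0∞) ^ (1/(n:ℝ))) ^ (n:ℝ) ≤ ((ρ:ℝ≥0∞)) ^ (n:ℝ) :=
    ENNReal.rpow_le_rpow h1.le (Nat.cast_nonneg n)
  rw [← ENNReal.rpow_mul, one_div, inv_mul_cancel₀ hne, ENNReal.rpow_one,
    ENNReal.rpow_natCast] at h4
  have hBn : ‖B ^ n‖₊ ≤ ρ ^ n := by exact_mod_cast h4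
  have hBnR : ‖B ^ n‖ ≤ (ρ:ℝ) ^ n := by exact_mod_cast hBn
  have hmap : ∀ m : ℕ, Am ^ m = (A ^ m).map Complex.ofReal := by
    intro m
    have := map_pow (Complex.ofRealHom.mapMatrix) A m
    exact this.symm
  set yC : Fin d → ℂ := fun i => ((y i : ℝ) : ℂ) with hyCdef
  have hxC : xC = (Am ^ n) *ᵥ yC := by
    funext i
    have := RingHom.map_mulVec (Complex.ofRealHom) (A ^ n) (fun j => (y j : ℝ)) i
    rw [hxCdef, hy]
    rw [hmap n]
    exact this
  have hpow : ∀ m : ℕ, B ^ m * Am ^ m = 1 := by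
    intro m
    induction m with
    | zero => simp
    | succ m ih =>
      rw [pow_succ, pow_succ']
      calc B ^ m * B * (Am * Am ^ m) = B ^ m * (B * Am * Am ^ m) := by
            rw [mul_assoc, mul_assoc]
        _ = 1 := by rw [hBA, one_mul, ih]
  have hyC : yC = (B ^ n) *ᵥ xC := by
    rw [hxC, Matrix.mulVec_mulVec, hpow n, Matrix.one_mulVec]
  have hy0 : y ≠ 0 := by
    rintro rfl
    apply hx
    have hz : (fun i => (((0 : Fin d → ℤ)) i : ℝ)) = (0 : Fin d → ℝ) := by funext i; simp
    rw [hy, hz, Matrix.mulVec_zero]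
  obtain ⟨i, hi⟩ := Function.ne_iff.mp hy0
  have hyi : (1:ℝ) ≤ ‖yC i‖ := by
    rw [hyCdef]
    simp only [Complex.norm_real, Real.norm_eq_abs, ← Int.cast_abs]
    exact_mod_cast Int.one_le_abs hi
  have hle1 : ‖yC i‖ ≤ ‖yC‖ := norm_le_pi_norm yC i
  have hle2 : ‖yC‖ ≤ ‖B ^ n‖ * ‖xC‖ := by
    rw [hyC]
    exact Matrix.linfty_opNorm_mulVec _ _
  have hle3 : ‖B ^ n‖ * ‖xC‖ ≤ (ρ:ℝ)^n * ‖xC‖ :=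
    mul_le_mul_of_nonneg_right hBnR (norm_nonneg _)
  linarith

/-- Let `A` be a `d×d` integer dilation matrix (all complex eigenvalues
greater than `1` in absolute value) and let `S(A) ⊂ [0,1)^d` be such that `A·S(A) ⊆ ℤ^d`
is a complete set of representatives of `ℤ^d/Aℤ^d` containing `0`. Then the sets
`A^j(ℤ^d + s)`, `j ≥ 1`, `s ∈ S(A)\{0}`, form a partition of `ℤ^d\{0}`: their union is
`ℤ^d\{0}` and they are pairwise disjoint. -/
theorem dilation_matrix_coset_partition
    (d : ℕ) (A : Matrix (Fin d) (Fin d) ℝ)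
    (hint : ∀ i j, ∃ z : ℤ, A i j = (z : ℝ))
    (heig : ∀ μ ∈ (A.map Complex.ofReal).charpoly.roots, 1 < ‖μ‖)
    (S : Finset (Fin d → ℝ))
    (hS01 : ∀ s ∈ S, ∀ i, 0 ≤ s i ∧ s i < 1)
    (hSZ : ∀ s ∈ S, ∀ i, ∃ z : ℤ, A.mulVec s i = (z : ℝ))
    (h0 : (0 : Fin d → ℝ) ∈ S)
    (hrep : ∀ k : Fin d → ℤ, ∃! s : Fin d → ℝ, s ∈ S ∧ ∃ m : Fin d → ℤ,
        (fun i => (k i : ℝ)) = A.mulVec s + A.mulVec (fun i => (m i : ℝ))) :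
    (⋃ j : ℕ, ⋃ (_ : 1 ≤ j), ⋃ s ∈ S, ⋃ (_ : s ≠ 0),
        (A ^ j).mulVec '' {x : Fin d → ℝ | ∃ k : Fin d → ℤ, x = (fun i => (k i : ℝ)) + s})
      = {x : Fin d → ℝ | ∃ k : Fin d → ℤ, k ≠ 0 ∧ x = fun i => (k i : ℝ)} ∧
    (∀ j j' : ℕ, 1 ≤ j → 1 ≤ j' → ∀ s ∈ S, s ≠ 0 → ∀ s' ∈ S, s' ≠ 0 →
      (j ≠ j' ∨ s ≠ s') →
      Disjoint
        ((A ^ j).mulVec '' {x : Fin d → ℝ | ∃ k : Fin d → ℤ, x = (fun i => (k i : ℝ)) + s})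
        ((A ^ j').mulVec '' {x : Fin d → ℝ | ∃ k : Fin d → ℤ, x = (fun i => (k i : ℝ)) + s'})) := by
  classical
  -- basic facts
  have hdetC := det_map_ne_zero_aux d A heig
  have hdetR : A.det ≠ 0 := by
    intro h
    apply hdetC
    have h2 : (A.map Complex.ofReal).det = ((A.det : ℝ) : ℂ) :=
      ((RingHom.map_det Complex.ofRealHom A).symm : _)
    rw [h2, h, Complex.ofReal_zero]
  have hiu : ∀ n : ℕ, IsUnit (A ^ n) := by
    intro n
    rw [Matrix.isUnit_iff_isUnit_det, Matrix.det_pow]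
    exact (Ne.isUnit hdetR).pow n
  have hinj : ∀ n : ℕ, Function.Injective ((A ^ n).mulVec) := fun n =>
    Matrix.mulVec_injective_iff_isUnit.mpr (hiu n)
  -- integer model of A
  set A' : Matrix (Fin d) (Fin d) ℤ := fun i j => (hint i j).choose with hA'def
  have hA' : ∀ i j, A i j = ((A' i j : ℤ) : ℝ) := fun i j => (hint i j).choose_spec
  have hAmap : ∀ n : ℕ, A ^ n = ((A' ^ n).map (Int.cast : ℤ → ℝ)) := by
    intro n
    have h0' : A = (Int.castRingHom ℝ).mapMatrix A' := by
      ext i j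
      simp [RingHom.mapMatrix_apply, Matrix.map_apply, hA' i j]
    rw [h0', ← map_pow, RingHom.mapMatrix_apply]
    rfl
  have hmul : ∀ (n : ℕ) (v : Fin d → ℤ),
      (A ^ n) *ᵥ (fun i => ((v i : ℤ) : ℝ)) = fun i => (((A' ^ n *ᵥ v) i : ℤ) : ℝ) := by
    intro n v
    funext i
    rw [hAmap n]
    exact (RingHom.map_mulVec (Int.castRingHom ℝ) (A' ^ n) v i).symm
  have hmul1 : ∀ v : Fin d → ℤ,
      A *ᵥ (fun i => ((v i : ℤ) : ℝ)) = fun i => (((A' *ᵥ v) i : ℤ) : ℝ) := by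
    intro v
    have := hmul 1 v
    rwa [pow_one, pow_one] at this
  have hbs : ∀ s ∈ S, ∃ b : Fin d → ℤ, A.mulVec s = fun i => ((b i : ℤ) : ℝ) := by
    intro s hs
    exact ⟨fun i => (hSZ s hs i).choose, funext fun i => (hSZ s hs i).choose_spec⟩
  have hszero : ∀ s ∈ S, (∀ i, ∃ z : ℤ, s i = (z : ℝ)) → s = 0 := by
    intro s hs h
    funext i
    obtain ⟨z, hz⟩ := h i
    obtain ⟨hz0, hz1⟩ := hS01 s hs i
    rw [hz] at hz0 hz1 ⊢
    have hz0' : (0 : ℤ) ≤ z := by exact_mod_cast hz0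
    have hz1' : z < 1 := by exact_mod_cast hz1
    have : z = 0 := by omega
    simp [this]
  have hstep : ∀ s ∈ S, ∀ k : Fin d → ℤ, ∃ w : Fin d → ℤ,
      A *ᵥ ((fun i => ((k i : ℤ) : ℝ)) + s) = fun i => ((w i : ℤ) : ℝ) := by
    intro s hs k
    obtain ⟨b, hb⟩ := hbs s hs
    refine ⟨A' *ᵥ k + b, ?_⟩
    rw [Matrix.mulVec_add, hmul1 k, hb]
    funext i
    simp
  have hpowint : ∀ (j : ℕ), 1 ≤ j → ∀ s ∈ S, ∀ k : Fin d → ℤ, ∃ w : Fin d → ℤ,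
      (A ^ j) *ᵥ ((fun i => ((k i : ℤ) : ℝ)) + s) = fun i => ((w i : ℤ) : ℝ) := by
    intro j hj s hs k
    obtain ⟨m, rfl⟩ := Nat.exists_eq_add_of_le hj
    obtain ⟨w₁, hw₁⟩ := hstep s hs k
    refine ⟨A' ^ m *ᵥ w₁, ?_⟩
    rw [add_comm 1 m, pow_succ, ← Matrix.mulVec_mulVec, hw₁, hmul m w₁]
  -- key disjointness computation
  have key : ∀ (j j' : ℕ), 1 ≤ j → 1 ≤ j' → ∀ s ∈ S, s ≠ 0 → ∀ s' ∈ S,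
      ∀ k k' : Fin d → ℤ, j ≤ j' →
      (A ^ j) *ᵥ ((fun i => ((k i : ℤ) : ℝ)) + s)
        = (A ^ j') *ᵥ ((fun i => ((k' i : ℤ) : ℝ)) + s') → j = j' ∧ s = s' := by
    intro j j' hj hj' s hs hs0 s' hs' k k' hle heq
    obtain ⟨t, rfl⟩ := Nat.exists_eq_add_of_le hle
    rw [pow_add, ← Matrix.mulVec_mulVec] at heq
    have heq2 : (fun i => ((k i : ℤ) : ℝ)) + s
        = (A ^ t) *ᵥ ((fun i => ((k' i : ℤ) : ℝ)) + s') := hinj j heq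
    rcases Nat.eq_zero_or_pos t with ht | ht
    · subst ht
      rw [pow_zero, Matrix.one_mulVec] at heq2
      have hss' : s = s' := by
        funext i
        have hi := congrFun heq2 i
        simp only [Pi.add_apply] at hi
        have : s i - s' i = ((k' i - k i : ℤ) : ℝ) := by push_cast; linarith
        obtain ⟨h10, h11⟩ := hS01 s hs i
        obtain ⟨h20, h21⟩ := hS01 s' hs' i
        have hz : (k' i - k i : ℤ) = 0 := by
          have l1 : ((k' i - k i : ℤ) : ℝ) < 1 := by rw [← this]; linarith
          have l2 : (-1 : ℝ) < ((k' i - k i : ℤ) : ℝ) := by rw [← this]; linarith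
          have l1' : (k' i - k i : ℤ) < 1 := by exact_mod_cast l1
          have l2' : (-1 : ℤ) < (k' i - k i : ℤ) := by exact_mod_cast l2
          omega
        rw [hz] at this
        simp at this
        linarith
      exact ⟨by omega, hss'⟩
    · exfalso
      obtain ⟨w, hw⟩ := hpowint t ht s' hs' k'
      rw [hw] at heq2
      apply hs0
      apply hszero s hs
      intro i
      have hi := congrFun heq2 i
      simp only [Pi.add_apply] at hi
      exact ⟨w i - k i, by push_cast; linarith⟩
  constructor
  · -- the union equality
    ext x
    simp only [Set.mem_iUnion, Set.mem_image, Set.mem_setOf_eq, exists_prop]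
    constructor
    · rintro ⟨j, hj, s, hs, hs0, x', ⟨k, rfl⟩, rfl⟩
      obtain ⟨w, hw⟩ := hpowint j hj s hs k
      refine ⟨w, ?_, hw⟩
      rintro rfl
      have h0' : (fun i => (((0 : Fin d → ℤ)) i : ℝ)) = (0 : Fin d → ℝ) := by funext i; simp
      rw [h0'] at hw
      have : (fun i => ((k i : ℤ) : ℝ)) + s = 0 := by
        apply hinj j
        rw [hw, Matrix.mulVec_zero]
      apply hs0
      apply hszero s hs
      intro i
      have hi := congrFun this i
      simp only [Pi.add_apply, Pi.zero_apply] at hi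
      exact ⟨-k i, by push_cast; linarith⟩
    · rintro ⟨k, hk0, rfl⟩
      have hx : (fun i => ((k i : ℤ) : ℝ)) ≠ 0 := by
        intro h
        apply hk0
        funext i
        have := congrFun h i
        simpa using this
      obtain ⟨N, hN⟩ := decay_aux d A heig _ hx
      set P : ℕ → Prop := fun n => ∃ y : Fin d → ℤ,
        (fun i => ((k i : ℤ) : ℝ)) = (A ^ n).mulVec (fun i => (y i : ℝ)) with hP
      have hP0 : P 0 := ⟨k, by rw [pow_zero, Matrix.one_mulVec]⟩
      set n := Nat.findGreatest P N with hn
      have hPn : P n := Nat.findGreatest_spec (Nat.zero_le N) hP0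
      have hnot : ¬ P (n + 1) := by
        rcases le_or_gt (n + 1) N with hle | hlt
        · exact Nat.findGreatest_is_greatest (Nat.lt_succ_self n) hle
        · exact hN (n + 1) (by omega)
      obtain ⟨y, hy⟩ := hPn
      obtain ⟨s, ⟨hsS, m, hym⟩, _⟩ := hrep y
      have hs0 : s ≠ 0 := by
        rintro rfl
        apply hnot
        refine ⟨m, ?_⟩
        rw [hy, hym]
        rw [Matrix.mulVec_zero, zero_add]  -- A *ᵥ 0 = 0
        rw [pow_succ, ← Matrix.mulVec_mulVec]
      refine ⟨n + 1, by omega, s, hsS, hs0, (fun i => ((m i : ℤ) : ℝ)) + s, ⟨m, rfl⟩, ?_⟩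
      rw [pow_succ, ← Matrix.mulVec_mulVec, Matrix.mulVec_add,
        add_comm (A *ᵥ (fun i => ((m i : ℤ) : ℝ))) (A *ᵥ s), ← hym]
      exact hy.symm
  · -- disjointness
    intro j j' hj hj' s hs hs0 s' hs' hs0' hne
    rw [Set.disjoint_left]
    rintro x ⟨x1, ⟨k, rfl⟩, rfl⟩ ⟨x2, ⟨k', rfl⟩, hx2⟩
    rcases le_total j j' with hle | hle
    · obtain ⟨hjj, hss⟩ := key j j' hj hj' s hs hs0 s' hs' k k' hle hx2.symm
      rcases hne with h | h
      · exact h hjj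
      · exact h hss
    · obtain ⟨hjj, hss⟩ := key j' j hj' hj s' hs' hs0' s hs k' k hle hx2
      rcases hne with h | h
      · exact h hjj.symm
      · exact h hss.symm
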